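/- Let p be a prime, d ≥ 3, and let B : Z_p^d × Z_p^d → Z_p^{d−1} be the bilinear map with B(u, v)_k = u_k v_{k+1} − u_{k+1} v_k. Then the Jacobson radical J of the ring Adj(B) equals {(y·E_{21} + z·E_{d−1,d}, −(y·E_{21} + z·E_{d−1,d})) : y, z ∈ Z_p}, and J² = 0. -/

import Mathlib

open Matrix MulOpposite

/-- The type-`A` bilinear map `B : ℤₚᵈ × ℤₚᵈ → ℤₚ^{d−1}`,
`B(u,v)_k = u_k v_{k+1} − u_{k+1} v_k`. -/
def Bform (p d : ℕ) (u v : Fin d → ZMod p) : Fin (d - 1) → ZMod p :=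
  fun k => u ⟨(k : ℕ), by have := k.isLt; omega⟩ * v ⟨(k : ℕ) + 1, by have := k.isLt; omega⟩
    - u ⟨(k : ℕ) + 1, by have := k.isLt; omega⟩ * v ⟨(k : ℕ), by have := k.isLt; omega⟩

theorem Bform_add_left (p d : ℕ) (u u' v : Fin d → ZMod p) :
    Bform p d (u + u') v = Bform p d u v + Bform p d u' v := by
  funext k; simp [Bform]; ring

theorem Bform_add_right (p d : ℕ) (u v v' : Fin d → ZMod p) :
    Bform p d u (v + v') = Bform p d u v + Bform p d u v' := by
  funext k; simp [Bform]; ring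

theorem Bform_neg_left (p d : ℕ) (u v : Fin d → ZMod p) :
    Bform p d (-u) v = -Bform p d u v := by
  funext k; simp [Bform]; ring

theorem Bform_neg_right (p d : ℕ) (u v : Fin d → ZMod p) :
    Bform p d u (-v) = -Bform p d u v := by
  funext k; simp [Bform]; ring

/-- The adjoint ring `Adj(B)` of the type-`A` bilinear map `B = Bform p d`, realized as a
subring of `M_d(ℤₚ) × M_d(ℤₚ)ᵐᵒᵖ` (so that the multiplication is
`(f,g)·(f',g') = (f f', g' g)`), with matrices acting on row vectors on the right:
`(f, g) ∈ Adj(B)` iff `B(u f, v) = B(u, v g)` for all row vectors `u, v`. -/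
def AdjRing (p d : ℕ) :
    Subring (Matrix (Fin d) (Fin d) (ZMod p) × (Matrix (Fin d) (Fin d) (ZMod p))ᵐᵒᵖ) where
  carrier := {fg | ∀ u v : Fin d → ZMod p,
    Bform p d (u ᵥ* fg.1) v = Bform p d u (v ᵥ* fg.2.unop)}
  zero_mem' := by intro u v; simp [Matrix.vecMul_zero]; funext k; simp [Bform]
  one_mem' := by intro u v; simp [Matrix.vecMul_one]
  add_mem' := by
    rintro a b ha hb u v
    simp only [Prod.fst_add, Prod.snd_add, unop_add, Matrix.vecMul_add]
    rw [Bform_add_left, Bform_add_right, ha u v, hb u v]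
  neg_mem' := by
    rintro a ha u v
    simp only [Prod.fst_neg, Prod.snd_neg, unop_neg, Matrix.vecMul_neg]
    rw [Bform_neg_left, Bform_neg_right, ha u v]
  mul_mem' := by
    rintro a b ha hb u v
    show Bform p d (u ᵥ* (a.1 * b.1)) v = Bform p d u (v ᵥ* (a.2 * b.2).unop)
    rw [unop_mul, ← Matrix.vecMul_vecMul, ← Matrix.vecMul_vecMul, hb, ha]

lemma aux_lt1 {d : ℕ} (hd : 3 ≤ d) : 1 < d := by omega
lemma aux_lt0 {d : ℕ} (hd : 3 ≤ d) : 0 < d := by omega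
lemma aux_lt2 {d : ℕ} (hd : 3 ≤ d) : d - 2 < d := by omega
lemma aux_lt3 {d : ℕ} (hd : 3 ≤ d) : d - 1 < d := by omega

section Helpers
open Matrix MulOpposite

variable {p d : ℕ}

/-- first-component matrix of a generic adjoint pair -/
def Fm (hd : 3 ≤ d) (a b y z : ZMod p) : Matrix (Fin d) (Fin d) (ZMod p) :=
  Matrix.diagonal (fun i : Fin d => if (i : ℕ) % 2 = 0 then a else b)
    + y • Matrix.single (⟨1, aux_lt1 hd⟩ : Fin d) (⟨0, aux_lt0 hd⟩ : Fin d) (1 : ZMod p)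
    + z • Matrix.single (⟨d - 2, aux_lt2 hd⟩ : Fin d) (⟨d - 1, aux_lt3 hd⟩ : Fin d) (1 : ZMod p)

/-- second-component matrix of a generic adjoint pair -/
def Gm (hd : 3 ≤ d) (a b y z : ZMod p) : Matrix (Fin d) (Fin d) (ZMod p) :=
  Matrix.diagonal (fun i : Fin d => if (i : ℕ) % 2 = 0 then b else a)
    - y • Matrix.single (⟨1, aux_lt1 hd⟩ : Fin d) (⟨0, aux_lt0 hd⟩ : Fin d) (1 : ZMod p)
    - z • Matrix.single (⟨d - 2, aux_lt2 hd⟩ : Fin d) (⟨d - 1, aux_lt3 hd⟩ : Fin d) (1 : ZMod p)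

def Pr (hd : 3 ≤ d) (a b y z : ZMod p) :
    Matrix (Fin d) (Fin d) (ZMod p) × (Matrix (Fin d) (Fin d) (ZMod p))ᵐᵒᵖ :=
  (Fm hd a b y z, op (Gm hd a b y z))

lemma Fm_apply (hd : 3 ≤ d) (a b y z : ZMod p) (i c : Fin d) :
    Fm hd a b y z i c =
      if i = c then (if (i : ℕ) % 2 = 0 then a else b)
      else if (i : ℕ) = 1 ∧ (c : ℕ) = 0 then y
      else if (i : ℕ) = d - 2 ∧ (c : ℕ) = d - 1 then z else 0 := by
  have hi := i.isLt
  have hc := c.isLt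
  simp only [Fm, Matrix.add_apply, Matrix.smul_apply, Matrix.diagonal_apply,
    Matrix.single, Matrix.of_apply, smul_eq_mul, Fin.ext_iff]
  split_ifs <;> first | (exfalso; omega) | ring

lemma Gm_apply (hd : 3 ≤ d) (a b y z : ZMod p) (i c : Fin d) :
    Gm hd a b y z i c =
      if i = c then (if (i : ℕ) % 2 = 0 then b else a)
      else if (i : ℕ) = 1 ∧ (c : ℕ) = 0 then -y
      else if (i : ℕ) = d - 2 ∧ (c : ℕ) = d - 1 then -z else 0 := by
  have hi := i.isLt
  have hc := c.isLt
  simp only [Gm, Matrix.sub_apply, Matrix.smul_apply, Matrix.diagonal_apply,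
    Matrix.single, Matrix.of_apply, smul_eq_mul, Fin.ext_iff]
  split_ifs <;> first | (exfalso; omega) | ring

end Helpers
section Key
open Matrix MulOpposite
variable {p d : ℕ}

lemma adj_key {f g : Matrix (Fin d) (Fin d) (ZMod p)}
    (h : (f, op g) ∈ AdjRing p d) (i j : Fin d) (k : ℕ) (hk : k < d - 1) :
    f i ⟨k, by omega⟩ * (if (⟨k + 1, by omega⟩ : Fin d) = j then 1 else 0)
      - f i ⟨k + 1, by omega⟩ * (if (⟨k, by omega⟩ : Fin d) = j then 1 else 0)
    = (if (⟨k, by omega⟩ : Fin d) = i then 1 else 0) * g j ⟨k + 1, by omega⟩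
      - (if (⟨k + 1, by omega⟩ : Fin d) = i then 1 else 0) * g j ⟨k, by omega⟩ := by
  have h' := h (Pi.single i 1) (Pi.single j 1)
  have h2 := congrFun h' ⟨k, hk⟩
  simp only [Bform, Matrix.single_one_vecMul, Pi.single_apply, unop_op] at h2
  exact h2

end Key

section Facts
open Matrix MulOpposite
variable {p d : ℕ} {f g : Matrix (Fin d) (Fin d) (ZMod p)}

lemma adj_f1 (hd : 3 ≤ d) (h : (f, op g) ∈ AdjRing p d) {i c : Fin d}
    (h1 : 1 ≤ (c : ℕ)) (h2 : (i : ℕ) ≠ (c : ℕ) - 1) (h3 : (i : ℕ) ≠ (c : ℕ)) :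
    f i c = 0 := by
  have hi := i.isLt; have hc := c.isLt
  have key := adj_key h i ⟨(c : ℕ) - 1, by omega⟩ ((c : ℕ) - 1) (by omega)
  simp only [Fin.ext_iff, Fin.val_mk] at key
  split_ifs at key <;> try omega
  simp only [show (c : ℕ) - 1 + 1 = (c : ℕ) from by omega, Fin.eta] at key
  linear_combination -key

lemma adj_f2 (hd : 3 ≤ d) (h : (f, op g) ∈ AdjRing p d) {i c : Fin d}
    (h1 : (c : ℕ) ≤ d - 2) (h2 : (i : ℕ) ≠ (c : ℕ)) (h3 : (i : ℕ) ≠ (c : ℕ) + 1) :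
    f i c = 0 := by
  have hi := i.isLt; have hc := c.isLt
  have key := adj_key h i ⟨(c : ℕ) + 1, by omega⟩ (c : ℕ) (by omega)
  simp only [Fin.ext_iff, Fin.val_mk] at key
  split_ifs at key <;> first | omega | (exact absurd trivial (by assumption)) | (exact ((by assumption : False)).elim) | skip
  simp only [Fin.eta] at key
  linear_combination key
end Facts

section Facts2
open Matrix MulOpposite
variable {p d : ℕ} {f g : Matrix (Fin d) (Fin d) (ZMod p)}

lemma adj_g1 (hd : 3 ≤ d) (h : (f, op g) ∈ AdjRing p d) {j c : Fin d}
    (h1 : 1 ≤ (c : ℕ)) (h2 : (j : ℕ) ≠ (c : ℕ) - 1) (h3 : (j : ℕ) ≠ (c : ℕ)) :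
    g j c = 0 := by
  have hj := j.isLt; have hc := c.isLt
  have key := adj_key h ⟨(c : ℕ) - 1, by omega⟩ j ((c : ℕ) - 1) (by omega)
  simp only [Fin.ext_iff, Fin.val_mk] at key
  split_ifs at key <;> first | omega | (exact absurd trivial (by assumption)) | (exact ((by assumption : False)).elim) | skip
  simp only [show (c : ℕ) - 1 + 1 = (c : ℕ) from by omega, Fin.eta] at key
  linear_combination -key

lemma adj_g2 (hd : 3 ≤ d) (h : (f, op g) ∈ AdjRing p d) {j c : Fin d}
    (h1 : (c : ℕ) ≤ d - 2) (h2 : (j : ℕ) ≠ (c : ℕ)) (h3 : (j : ℕ) ≠ (c : ℕ) + 1) :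
    g j c = 0 := by
  have hj := j.isLt; have hc := c.isLt
  have key := adj_key h ⟨(c : ℕ) + 1, by omega⟩ j (c : ℕ) (by omega)
  simp only [Fin.ext_iff, Fin.val_mk] at key
  split_ifs at key <;> first | omega | (exact absurd trivial (by assumption)) | (exact ((by assumption : False)).elim) | skip
  simp only [Fin.eta] at key
  linear_combination key

lemma adj_E (hd : 3 ≤ d) (h : (f, op g) ∈ AdjRing p d) (k : ℕ) (hk : k < d - 1) :
    f ⟨k, by omega⟩ ⟨k, by omega⟩ = g ⟨k + 1, by omega⟩ ⟨k + 1, by omega⟩ := by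
  have key := adj_key h ⟨k, by omega⟩ ⟨k + 1, by omega⟩ k hk
  simp only [Fin.ext_iff, Fin.val_mk] at key
  split_ifs at key <;> first | omega | (exact absurd trivial (by assumption)) | (exact ((by assumption : False)).elim) | skip
  linear_combination key

lemma adj_F (hd : 3 ≤ d) (h : (f, op g) ∈ AdjRing p d) (k : ℕ) (hk : k < d - 1) :
    g ⟨k, by omega⟩ ⟨k, by omega⟩ = f ⟨k + 1, by omega⟩ ⟨k + 1, by omega⟩ := by
  have key := adj_key h ⟨k + 1, by omega⟩ ⟨k, by omega⟩ k hk
  simp only [Fin.ext_iff, Fin.val_mk] at key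
  split_ifs at key <;> first | omega | (exact absurd trivial (by assumption)) | (exact ((by assumption : False)).elim) | skip
  linear_combination key

lemma adj_Y (hd : 3 ≤ d) (h : (f, op g) ∈ AdjRing p d) :
    g ⟨1, aux_lt1 hd⟩ ⟨0, aux_lt0 hd⟩ = - f ⟨1, aux_lt1 hd⟩ ⟨0, aux_lt0 hd⟩ := by
  have key := adj_key h ⟨1, aux_lt1 hd⟩ ⟨1, aux_lt1 hd⟩ 0 (by omega)
  simp only [Fin.ext_iff, Fin.val_mk] at key
  split_ifs at key <;> first | omega | (exact absurd trivial (by assumption)) | (exact ((by assumption : False)).elim) | skip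
  linear_combination key

lemma adj_Z (hd : 3 ≤ d) (h : (f, op g) ∈ AdjRing p d) :
    g ⟨d - 2, aux_lt2 hd⟩ ⟨d - 1, aux_lt3 hd⟩ = - f ⟨d - 2, aux_lt2 hd⟩ ⟨d - 1, aux_lt3 hd⟩ := by
  have key := adj_key h ⟨d - 2, aux_lt2 hd⟩ ⟨d - 2, aux_lt2 hd⟩ (d - 2) (by omega)
  simp only [Fin.ext_iff, Fin.val_mk] at key
  split_ifs at key <;> first | omega | (exact absurd trivial (by assumption)) | (exact ((by assumption : False)).elim) | skip
  simp only [show d - 2 + 1 = d - 1 from by omega] at key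
  linear_combination -key

lemma adj_diag (hd : 3 ≤ d) (h : (f, op g) ∈ AdjRing p d) (n : ℕ) (hn : n < d) :
    f ⟨n, hn⟩ ⟨n, hn⟩
        = (if n % 2 = 0 then f ⟨0, aux_lt0 hd⟩ ⟨0, aux_lt0 hd⟩ else g ⟨0, aux_lt0 hd⟩ ⟨0, aux_lt0 hd⟩)
      ∧ g ⟨n, hn⟩ ⟨n, hn⟩
        = (if n % 2 = 0 then g ⟨0, aux_lt0 hd⟩ ⟨0, aux_lt0 hd⟩ else f ⟨0, aux_lt0 hd⟩ ⟨0, aux_lt0 hd⟩) := by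
  induction n with
  | zero => simp
  | succ m ih =>
    have hm : m < d := by omega
    have hm' : m < d - 1 := by omega
    obtain ⟨ihf, ihg⟩ := ih hm
    constructor
    · rw [← adj_F hd h m hm', ihg]
      rcases Nat.mod_two_eq_zero_or_one m with hpar | hpar <;>
        simp [hpar, Nat.succ_mod_two_eq_zero_iff, Nat.succ_mod_two_eq_one_iff] <;> omega
    · rw [← adj_E hd h m hm', ihf]
      rcases Nat.mod_two_eq_zero_or_one m with hpar | hpar <;>
        simp [hpar, Nat.succ_mod_two_eq_zero_iff, Nat.succ_mod_two_eq_one_iff] <;> omega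

end Facts2

section Gens
open Matrix MulOpposite
variable {p d : ℕ}

lemma vecMul_std (u : Fin d → ZMod p) (i j : Fin d) :
    u ᵥ* Matrix.single i j (1 : ZMod p) = fun c => if c = j then u i else 0 := by
  funext c
  simp only [Matrix.vecMul, dotProduct, Matrix.single, Matrix.of_apply,
    mul_ite, mul_one, mul_zero, ite_and]
  rw [Finset.sum_eq_single i (fun r _ hr => if_neg (Ne.symm hr))
    (fun h => absurd (Finset.mem_univ i) h)]
  simp [eq_comm]

lemma vecMul_smul_mat (c : ZMod p) (u : Fin d → ZMod p) (M : Matrix (Fin d) (Fin d) (ZMod p)) :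
    u ᵥ* (c • M) = c • (u ᵥ* M) := by
  funext j
  simp [Matrix.vecMul, dotProduct, Finset.mul_sum]
  ring_nf
  apply Finset.sum_congr rfl
  intro r _
  ring

lemma Bform_smul_left (c : ZMod p) (u v : Fin d → ZMod p) :
    Bform p d (c • u) v = c • Bform p d u v := by
  funext k; simp [Bform]; ring

lemma Bform_smul_right (c : ZMod p) (u v : Fin d → ZMod p) :
    Bform p d u (c • v) = c • Bform p d u v := by
  funext k; simp [Bform]; ring

lemma adj_smul_mem (c : ZMod p)
    {x : Matrix (Fin d) (Fin d) (ZMod p) × (Matrix (Fin d) (Fin d) (ZMod p))ᵐᵒᵖ}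
    (h : x ∈ AdjRing p d) : c • x ∈ AdjRing p d := by
  intro u v
  have h' := h u v
  simp only [Prod.smul_fst, Prod.smul_snd, unop_smul, vecMul_smul_mat,
    Bform_smul_left, Bform_smul_right, h']

lemma genD1_mem (hd : 3 ≤ d) :
    ((Matrix.diagonal fun i : Fin d => if (i : ℕ) % 2 = 0 then (1 : ZMod p) else 0),
      op (Matrix.diagonal fun i : Fin d => if (i : ℕ) % 2 = 0 then (0 : ZMod p) else 1))
      ∈ AdjRing p d := by
  intro u v
  funext k
  have hk := k.isLt
  simp only [Bform, unop_op, Matrix.vecMul_diagonal]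
  split_ifs <;> first | (exfalso; omega) | ring1

lemma genD2_mem (hd : 3 ≤ d) :
    ((Matrix.diagonal fun i : Fin d => if (i : ℕ) % 2 = 0 then (0 : ZMod p) else 1),
      op (Matrix.diagonal fun i : Fin d => if (i : ℕ) % 2 = 0 then (1 : ZMod p) else 0))
      ∈ AdjRing p d := by
  intro u v
  funext k
  have hk := k.isLt
  simp only [Bform, unop_op, Matrix.vecMul_diagonal]
  split_ifs <;> first | (exfalso; omega) | ring1

lemma genY_mem (hd : 3 ≤ d) :
    ((Matrix.single (⟨1, aux_lt1 hd⟩ : Fin d) (⟨0, aux_lt0 hd⟩ : Fin d) (1 : ZMod p)),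
      op (-(Matrix.single (⟨1, aux_lt1 hd⟩ : Fin d) (⟨0, aux_lt0 hd⟩ : Fin d) (1 : ZMod p))))
      ∈ AdjRing p d := by
  intro u v
  funext k
  have hk := k.isLt
  simp only [Bform, unop_op, Matrix.vecMul_neg, vecMul_std, Pi.neg_apply, Fin.ext_iff,
    Fin.val_mk]
  split_ifs <;>
    first
      | (exfalso; omega)
      | (exact ((by assumption : False)).elim)
      | ring1
      | (simp only [show (k : ℕ) = 0 from by omega]; ring1)

lemma genZ_mem (hd : 3 ≤ d) :
    ((Matrix.single (⟨d - 2, aux_lt2 hd⟩ : Fin d) (⟨d - 1, aux_lt3 hd⟩ : Fin d) (1 : ZMod p)),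
      op (-(Matrix.single (⟨d - 2, aux_lt2 hd⟩ : Fin d) (⟨d - 1, aux_lt3 hd⟩ : Fin d)
        (1 : ZMod p)))) ∈ AdjRing p d := by
  intro u v
  funext k
  have hk := k.isLt
  simp only [Bform, unop_op, Matrix.vecMul_neg, vecMul_std, Pi.neg_apply, Fin.ext_iff,
    Fin.val_mk]
  split_ifs <;>
    first
      | (exfalso; omega)
      | (exact ((by assumption : False)).elim)
      | ring1
      | (simp only [show (k : ℕ) = d - 2 from by omega]; ring1)

end Gens

section PrLemmas
open Matrix MulOpposite
variable {p d : ℕ}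

lemma Fm_decomp (hd : 3 ≤ d) (a b y z : ZMod p) :
    Fm hd a b y z =
      a • (Matrix.diagonal fun i : Fin d => if (i : ℕ) % 2 = 0 then (1 : ZMod p) else 0)
      + b • (Matrix.diagonal fun i : Fin d => if (i : ℕ) % 2 = 0 then (0 : ZMod p) else 1)
      + y • Matrix.single (⟨1, aux_lt1 hd⟩ : Fin d) (⟨0, aux_lt0 hd⟩ : Fin d) (1 : ZMod p)
      + z • Matrix.single (⟨d - 2, aux_lt2 hd⟩ : Fin d) (⟨d - 1, aux_lt3 hd⟩ : Fin d)
          (1 : ZMod p) := by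
  ext i c
  have hi := i.isLt; have hc := c.isLt
  rw [Fm_apply]
  simp only [Matrix.add_apply, Matrix.smul_apply, Matrix.diagonal_apply, Matrix.single,
    Matrix.of_apply, smul_eq_mul, Fin.ext_iff, Fin.val_mk]
  split_ifs <;> first | (exfalso; omega) | (exact ((by assumption : False)).elim) | ring1

lemma Gm_decomp (hd : 3 ≤ d) (a b y z : ZMod p) :
    Gm hd a b y z =
      a • (Matrix.diagonal fun i : Fin d => if (i : ℕ) % 2 = 0 then (0 : ZMod p) else 1)
      + b • (Matrix.diagonal fun i : Fin d => if (i : ℕ) % 2 = 0 then (1 : ZMod p) else 0)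
      + y • (-(Matrix.single (⟨1, aux_lt1 hd⟩ : Fin d) (⟨0, aux_lt0 hd⟩ : Fin d) (1 : ZMod p)))
      + z • (-(Matrix.single (⟨d - 2, aux_lt2 hd⟩ : Fin d) (⟨d - 1, aux_lt3 hd⟩ : Fin d)
          (1 : ZMod p))) := by
  ext i c
  have hi := i.isLt; have hc := c.isLt
  rw [Gm_apply]
  simp only [Matrix.add_apply, Matrix.smul_apply, Matrix.neg_apply, Matrix.diagonal_apply,
    Matrix.single, Matrix.of_apply, smul_eq_mul, mul_neg, Fin.ext_iff, Fin.val_mk]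
  split_ifs <;> first | (exfalso; omega) | (exact ((by assumption : False)).elim) | ring1

lemma Pr_mem (hd : 3 ≤ d) (a b y z : ZMod p) : Pr hd a b y z ∈ AdjRing p d := by
  have h1 := adj_smul_mem a (genD1_mem (p := p) hd)
  have h2 := adj_smul_mem b (genD2_mem (p := p) hd)
  have h3 := adj_smul_mem y (genY_mem (p := p) hd)
  have h4 := adj_smul_mem z (genZ_mem (p := p) hd)
  have hsum := (AdjRing p d).add_mem ((AdjRing p d).add_mem ((AdjRing p d).add_mem h1 h2) h3) h4
  convert hsum using 1
  apply Prod.ext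
  · simpa [Prod.smul_fst, Pr] using Fm_decomp hd a b y z
  · show op (Gm hd a b y z) = _
    rw [Gm_decomp hd a b y z]
    simp only [Prod.snd_add, Prod.smul_snd, op_add]
    rw [← op_smul, ← op_smul, ← op_smul, ← op_smul]

end PrLemmas

section MulLemmas
open Matrix MulOpposite
variable {p d : ℕ}

lemma diag_mul_std (w : Fin d → ZMod p) (i j : Fin d) (c : ZMod p) :
    Matrix.diagonal w * Matrix.single i j c = Matrix.single i j (w i * c) := by
  ext r s
  rw [Matrix.diagonal_mul]
  simp only [Matrix.single, Matrix.of_apply]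
  split_ifs with h
  · obtain ⟨rfl, rfl⟩ := h; rfl
  · exact mul_zero _

lemma std_mul_diag (w : Fin d → ZMod p) (i j : Fin d) (c : ZMod p) :
    Matrix.single i j c * Matrix.diagonal w = Matrix.single i j (c * w j) := by
  ext r s
  rw [Matrix.mul_diagonal]
  simp only [Matrix.single, Matrix.of_apply]
  split_ifs with h
  · obtain ⟨rfl, rfl⟩ := h; rfl
  · exact zero_mul _

lemma Fm_mul (hd : 3 ≤ d) (a b y z a' b' y' z' : ZMod p) :
    Fm hd a b y z * Fm hd a' b' y' z' =
      Fm hd (a * a') (b * b') (b * y' + y * a')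
        ((if (d - 2) % 2 = 0 then a else b) * z'
          + z * (if (d - 1) % 2 = 0 then a' else b')) := by
  have m11 : Matrix.single (⟨1, aux_lt1 hd⟩ : Fin d) (⟨0, aux_lt0 hd⟩ : Fin d) (1 : ZMod p)
      * Matrix.single (⟨1, aux_lt1 hd⟩ : Fin d) (⟨0, aux_lt0 hd⟩ : Fin d) (1 : ZMod p) = 0 :=
    by apply Matrix.single_mul_single_of_ne; simp only [ne_eq, Fin.ext_iff, Fin.val_mk]; omega
  have m12 : Matrix.single (⟨1, aux_lt1 hd⟩ : Fin d) (⟨0, aux_lt0 hd⟩ : Fin d) (1 : ZMod p)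
      * Matrix.single (⟨d - 2, aux_lt2 hd⟩ : Fin d) (⟨d - 1, aux_lt3 hd⟩ : Fin d)
        (1 : ZMod p) = 0 :=
    by apply Matrix.single_mul_single_of_ne; simp only [ne_eq, Fin.ext_iff, Fin.val_mk]; omega
  have m21 : Matrix.single (⟨d - 2, aux_lt2 hd⟩ : Fin d) (⟨d - 1, aux_lt3 hd⟩ : Fin d)
        (1 : ZMod p)
      * Matrix.single (⟨1, aux_lt1 hd⟩ : Fin d) (⟨0, aux_lt0 hd⟩ : Fin d) (1 : ZMod p) = 0 :=
    by apply Matrix.single_mul_single_of_ne; simp only [ne_eq, Fin.ext_iff, Fin.val_mk]; omega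
  have m22 : Matrix.single (⟨d - 2, aux_lt2 hd⟩ : Fin d) (⟨d - 1, aux_lt3 hd⟩ : Fin d)
        (1 : ZMod p)
      * Matrix.single (⟨d - 2, aux_lt2 hd⟩ : Fin d) (⟨d - 1, aux_lt3 hd⟩ : Fin d)
        (1 : ZMod p) = 0 :=
    by apply Matrix.single_mul_single_of_ne; simp only [ne_eq, Fin.ext_iff, Fin.val_mk]; omega
  simp only [Fm, add_mul, mul_add, Matrix.smul_mul, Matrix.mul_smul,
    diag_mul_std, std_mul_diag, Matrix.diagonal_mul_diagonal,
    m11, m12, m21, m22, smul_zero, add_zero, zero_add, smul_smul]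
  ext r s
  have hr := r.isLt; have hs := s.isLt
  simp only [Matrix.add_apply, Matrix.smul_apply, Matrix.diagonal_apply, Matrix.single,
    Matrix.of_apply, smul_eq_mul, Fin.ext_iff, Fin.val_mk, mul_ite, ite_mul, mul_one, one_mul,
    mul_zero, zero_mul]
  split_ifs <;> first | (exfalso; omega) | (exact ((by assumption : False)).elim) | ring1

lemma Gm_mul (hd : 3 ≤ d) (a b y z a' b' y' z' : ZMod p) :
    Gm hd a' b' y' z' * Gm hd a b y z =
      Gm hd (a * a') (b * b') (b * y' + y * a')
        ((if (d - 2) % 2 = 0 then a else b) * z'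
          + z * (if (d - 1) % 2 = 0 then a' else b')) := by
  have m11 : Matrix.single (⟨1, aux_lt1 hd⟩ : Fin d) (⟨0, aux_lt0 hd⟩ : Fin d) (1 : ZMod p)
      * Matrix.single (⟨1, aux_lt1 hd⟩ : Fin d) (⟨0, aux_lt0 hd⟩ : Fin d) (1 : ZMod p) = 0 :=
    by apply Matrix.single_mul_single_of_ne; simp only [ne_eq, Fin.ext_iff, Fin.val_mk]; omega
  have m12 : Matrix.single (⟨1, aux_lt1 hd⟩ : Fin d) (⟨0, aux_lt0 hd⟩ : Fin d) (1 : ZMod p)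
      * Matrix.single (⟨d - 2, aux_lt2 hd⟩ : Fin d) (⟨d - 1, aux_lt3 hd⟩ : Fin d)
        (1 : ZMod p) = 0 :=
    by apply Matrix.single_mul_single_of_ne; simp only [ne_eq, Fin.ext_iff, Fin.val_mk]; omega
  have m21 : Matrix.single (⟨d - 2, aux_lt2 hd⟩ : Fin d) (⟨d - 1, aux_lt3 hd⟩ : Fin d)
        (1 : ZMod p)
      * Matrix.single (⟨1, aux_lt1 hd⟩ : Fin d) (⟨0, aux_lt0 hd⟩ : Fin d) (1 : ZMod p) = 0 :=
    by apply Matrix.single_mul_single_of_ne; simp only [ne_eq, Fin.ext_iff, Fin.val_mk]; omega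
  have m22 : Matrix.single (⟨d - 2, aux_lt2 hd⟩ : Fin d) (⟨d - 1, aux_lt3 hd⟩ : Fin d)
        (1 : ZMod p)
      * Matrix.single (⟨d - 2, aux_lt2 hd⟩ : Fin d) (⟨d - 1, aux_lt3 hd⟩ : Fin d)
        (1 : ZMod p) = 0 :=
    by apply Matrix.single_mul_single_of_ne; simp only [ne_eq, Fin.ext_iff, Fin.val_mk]; omega
  simp only [Gm, sub_mul, mul_sub, Matrix.smul_mul, Matrix.mul_smul,
    diag_mul_std, std_mul_diag, Matrix.diagonal_mul_diagonal,
    m11, m12, m21, m22, smul_zero, sub_zero, zero_sub, smul_smul]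
  ext r s
  have hr := r.isLt; have hs := s.isLt
  simp only [Matrix.sub_apply, Matrix.neg_apply, Matrix.add_apply, Matrix.smul_apply,
    Matrix.diagonal_apply, Matrix.single,
    Matrix.of_apply, smul_eq_mul, Fin.ext_iff, Fin.val_mk, mul_ite, ite_mul, mul_one, one_mul,
    mul_zero, zero_mul]
  split_ifs <;> first | (exfalso; omega) | (exact ((by assumption : False)).elim) | ring1

end MulLemmas

section PrAlg
open Matrix MulOpposite
variable {p d : ℕ}

lemma Pr_mul (hd : 3 ≤ d) (a b y z a' b' y' z' : ZMod p) :
    Pr hd a b y z * Pr hd a' b' y' z' =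
      Pr hd (a * a') (b * b') (b * y' + y * a')
        ((if (d - 2) % 2 = 0 then a else b) * z'
          + z * (if (d - 1) % 2 = 0 then a' else b')) := by
  unfold Pr
  rw [Prod.mk_mul_mk, ← op_mul, Fm_mul hd, Gm_mul hd]

lemma Pr_add (hd : 3 ≤ d) (a b y z a' b' y' z' : ZMod p) :
    Pr hd a b y z + Pr hd a' b' y' z' = Pr hd (a + a') (b + b') (y + y') (z + z') := by
  unfold Pr
  rw [Prod.mk_add_mk, ← op_add]
  congr 1 <;> [skip; congr 1] <;>
  · ext i c
    have hi := i.isLt; have hc := c.isLt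
    simp only [Matrix.add_apply, Fm_apply, Gm_apply]
    split_ifs <;> ring1

lemma Pr_one (hd : 3 ≤ d) : Pr hd (1 : ZMod p) 1 0 0 = 1 := by
  unfold Pr
  have h1 : Fm hd (1 : ZMod p) 1 0 0 = 1 := by
    ext i c
    rw [Fm_apply]
    simp only [Matrix.one_apply]
    split_ifs <;> simp_all
  have h2 : Gm hd (1 : ZMod p) 1 0 0 = 1 := by
    ext i c
    rw [Gm_apply]
    simp only [Matrix.one_apply]
    split_ifs <;> simp_all
  rw [h1, h2]
  rfl

lemma Pr_zero (hd : 3 ≤ d) : Pr hd (0 : ZMod p) 0 0 0 = 0 := by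
  unfold Pr
  have h1 : Fm hd (0 : ZMod p) 0 0 0 = 0 := by
    ext i c
    rw [Fm_apply]
    simp only [Matrix.zero_apply]
    split_ifs <;> simp_all
  have h2 : Gm hd (0 : ZMod p) 0 0 0 = 0 := by
    ext i c
    rw [Gm_apply]
    simp only [Matrix.zero_apply]
    split_ifs <;> simp_all
  rw [h1, h2]
  rfl

lemma Pr_nil (hd : 3 ≤ d) (y z : ZMod p) :
    Pr hd (0 : ZMod p) 0 y z =
      (y • Matrix.single (⟨1, aux_lt1 hd⟩ : Fin d) (⟨0, aux_lt0 hd⟩ : Fin d) (1 : ZMod p)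
        + z • Matrix.single (⟨d - 2, aux_lt2 hd⟩ : Fin d) (⟨d - 1, aux_lt3 hd⟩ : Fin d)
            (1 : ZMod p),
       op (-(y • Matrix.single (⟨1, aux_lt1 hd⟩ : Fin d) (⟨0, aux_lt0 hd⟩ : Fin d) (1 : ZMod p)
        + z • Matrix.single (⟨d - 2, aux_lt2 hd⟩ : Fin d) (⟨d - 1, aux_lt3 hd⟩ : Fin d)
            (1 : ZMod p)))) := by
  unfold Pr Fm Gm
  have hD : Matrix.diagonal (fun i : Fin d => if (i : ℕ) % 2 = 0 then (0 : ZMod p) else 0)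
      = 0 := by
    simp
  rw [hD]
  simp only [Prod.mk.injEq, op_inj]
  constructor <;> abel

lemma Pr_fst_entry (hd : 3 ≤ d) (a b y z : ZMod p) {i j : ℕ} (hi : i < d) (hj : j < d) :
    (Pr hd a b y z).1 ⟨i, hi⟩ ⟨j, hj⟩ =
      if i = j then (if i % 2 = 0 then a else b)
      else if i = 1 ∧ j = 0 then y
      else if i = d - 2 ∧ j = d - 1 then z else 0 := by
  show Fm hd a b y z _ _ = _
  rw [Fm_apply]
  simp only [Fin.ext_iff, Fin.val_mk]

lemma Pr_inj (hd : 3 ≤ d) {a b y z a' b' y' z' : ZMod p}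
    (h : Pr hd a b y z = Pr hd a' b' y' z') : a = a' ∧ b = b' ∧ y = y' ∧ z = z' := by
  have e := fun (i j : ℕ) (hi : i < d) (hj : j < d) =>
    congrFun (congrFun (congrArg Prod.fst h) ⟨i, hi⟩) ⟨j, hj⟩
  have ea := e 0 0 (by omega) (by omega)
  have eb := e 1 1 (by omega) (by omega)
  have ey := e 1 0 (by omega) (by omega)
  have ez := e (d - 2) (d - 1) (by omega) (by omega)
  rw [Pr_fst_entry hd, Pr_fst_entry hd] at ea eb ey ez
  refine ⟨?_, ?_, ?_, ?_⟩
  · simpa using ea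
  · simpa using eb
  · simpa using ey
  · have h1 : ¬(d - 2 = d - 1) := by omega
    have h2 : ¬(d - 2 = 1 ∧ d - 1 = 0) := by omega
    rw [if_neg h1, if_neg h2, if_pos ⟨rfl, rfl⟩, if_neg h1, if_neg h2,
      if_pos ⟨rfl, rfl⟩] at ez
    exact ez

end PrAlg

section MemIff
open Matrix MulOpposite
variable {p d : ℕ}

lemma mem_iff (hd : 3 ≤ d)
    (x : Matrix (Fin d) (Fin d) (ZMod p) × (Matrix (Fin d) (Fin d) (ZMod p))ᵐᵒᵖ) :
    x ∈ AdjRing p d ↔ ∃ a b y z : ZMod p, x = Pr hd a b y z := by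
  constructor
  · intro h
    obtain ⟨f, g2⟩ := x
    rw [show (f, g2) = (f, op g2.unop) from by simp] at h ⊢
    set g := g2.unop with hg
    refine ⟨f ⟨0, aux_lt0 hd⟩ ⟨0, aux_lt0 hd⟩, g ⟨0, aux_lt0 hd⟩ ⟨0, aux_lt0 hd⟩,
      f ⟨1, aux_lt1 hd⟩ ⟨0, aux_lt0 hd⟩, f ⟨d - 2, aux_lt2 hd⟩ ⟨d - 1, aux_lt3 hd⟩, ?_⟩
    have hf : f = Fm hd (f ⟨0, aux_lt0 hd⟩ ⟨0, aux_lt0 hd⟩) (g ⟨0, aux_lt0 hd⟩ ⟨0, aux_lt0 hd⟩)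
        (f ⟨1, aux_lt1 hd⟩ ⟨0, aux_lt0 hd⟩) (f ⟨d - 2, aux_lt2 hd⟩ ⟨d - 1, aux_lt3 hd⟩) := by
      ext i c
      have hi := i.isLt; have hc := c.isLt
      rw [Fm_apply]
      by_cases h1 : i = c
      · subst h1
        rw [if_pos rfl]
        have hdg := (adj_diag hd h (i : ℕ) i.isLt).1
        simpa [Fin.eta] using hdg
      · rw [if_neg h1]
        have hic : (i : ℕ) ≠ (c : ℕ) := fun e => h1 (Fin.ext e)
        by_cases h2 : (i : ℕ) = 1 ∧ (c : ℕ) = 0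
        · rw [if_pos h2]
          congr 2 <;> exact Fin.ext (by first | simpa using h2.1 | simpa using h2.2)
        · rw [if_neg h2]
          by_cases h3 : (i : ℕ) = d - 2 ∧ (c : ℕ) = d - 1
          · rw [if_pos h3]
            congr 2 <;> exact Fin.ext (by first | simpa using h3.1 | simpa using h3.2)
          · rw [if_neg h3]
            by_cases h4 : 1 ≤ (c : ℕ) ∧ (i : ℕ) ≠ (c : ℕ) - 1
            · exact adj_f1 hd h h4.1 h4.2 hic
            · exact adj_f2 hd h (by omega) hic (by omega)
    have hgm : g = Gm hd (f ⟨0, aux_lt0 hd⟩ ⟨0, aux_lt0 hd⟩) (g ⟨0, aux_lt0 hd⟩ ⟨0, aux_lt0 hd⟩)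
        (f ⟨1, aux_lt1 hd⟩ ⟨0, aux_lt0 hd⟩) (f ⟨d - 2, aux_lt2 hd⟩ ⟨d - 1, aux_lt3 hd⟩) := by
      ext j c
      have hj := j.isLt; have hc := c.isLt
      rw [Gm_apply]
      by_cases h1 : j = c
      · subst h1
        rw [if_pos rfl]
        have hdg := (adj_diag hd h (j : ℕ) j.isLt).2
        simpa [Fin.eta] using hdg
      · rw [if_neg h1]
        have hjc : (j : ℕ) ≠ (c : ℕ) := fun e => h1 (Fin.ext e)
        by_cases h2 : (j : ℕ) = 1 ∧ (c : ℕ) = 0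
        · rw [if_pos h2]
          have eg : g j c = g ⟨1, aux_lt1 hd⟩ ⟨0, aux_lt0 hd⟩ := by
            congr 2 <;> exact Fin.ext (by first | simpa using h2.1 | simpa using h2.2)
          rw [eg]
          exact adj_Y hd h
        · rw [if_neg h2]
          by_cases h3 : (j : ℕ) = d - 2 ∧ (c : ℕ) = d - 1
          · rw [if_pos h3]
            have eg : g j c = g ⟨d - 2, aux_lt2 hd⟩ ⟨d - 1, aux_lt3 hd⟩ := by
              congr 2 <;> exact Fin.ext (by first | simpa using h3.1 | simpa using h3.2)
            rw [eg]
            exact adj_Z hd h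
          · rw [if_neg h3]
            by_cases h4 : 1 ≤ (c : ℕ) ∧ (j : ℕ) ≠ (c : ℕ) - 1
            · exact adj_g1 hd h h4.1 h4.2 hjc
            · exact adj_g2 hd h (by omega) hjc (by omega)
    rw [Pr]
    exact Prod.ext (by simpa using hf) (by simp; exact hgm)
  · rintro ⟨a, b, y, z, rfl⟩
    exact Pr_mem hd a b y z

end MemIff

section FinalAux
open Matrix MulOpposite
variable {p d : ℕ}

lemma Pr_sub (hd : 3 ≤ d) (a b y z a' b' y' z' : ZMod p) :
    Pr hd a b y z - Pr hd a' b' y' z' = Pr hd (a - a') (b - b') (y - y') (z - z') := by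
  unfold Pr
  rw [Prod.mk_sub_mk, ← op_sub]
  congr 1 <;> [skip; congr 1] <;>
  · ext i c
    have hi := i.isLt; have hc := c.isLt
    simp only [Matrix.sub_apply, Fm_apply, Gm_apply]
    split_ifs <;> ring1

lemma Pr_mul_nil (hd : 3 ≤ d) (a b y z y' z' : ZMod p) :
    Pr hd a b y z * Pr hd 0 0 y' z' =
      Pr hd 0 0 (b * y') ((if (d - 2) % 2 = 0 then a else b) * z') := by
  rw [Pr_mul hd]
  simp only [mul_zero, add_zero, ite_self]

lemma Pr_nil_sq (hd : 3 ≤ d) (y z y' z' : ZMod p) :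
    Pr hd (0 : ZMod p) 0 y z * Pr hd 0 0 y' z' = 0 := by
  rw [Pr_mul hd]
  simp only [mul_zero, zero_mul, add_zero, zero_add, ite_self]
  exact Pr_zero hd

lemma Pr_scalar_mul (hd : 3 ≤ d) (t a b y z : ZMod p) :
    Pr hd t t 0 0 * Pr hd a b y z = Pr hd (t * a) (t * b) (t * y) (t * z) := by
  rw [Pr_mul hd]
  simp only [zero_mul, add_zero, ite_self]

end FinalAux
/-- Let `p` be a prime, `d ≥ 3`, and let `B` be the bilinear map
`B(u,v)_k = u_k v_{k+1} − u_{k+1} v_k`.  The Jacobson radical `J` of the ring `Adj(B)`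
(the intersection of its maximal left ideals, i.e. `Ideal.jacobson ⊥`) consists exactly of
the pairs `(y·E_{21} + z·E_{d−1,d}, −(y·E_{21} + z·E_{d−1,d}))` with `y, z ∈ ℤₚ`
(in `0`-based indexing `E_{21} = E 1 0`, `E_{d−1,d} = E (d−2) (d−1)`), and `J² = 0`. -/
theorem jacobson_adjoint_typeA (p d : ℕ) [Fact p.Prime] (hd : 3 ≤ d) :
    (∀ x : AdjRing p d,
      x ∈ Ideal.jacobson (⊥ : Ideal (AdjRing p d)) ↔
        ∃ y z : ZMod p,
          (x : Matrix (Fin d) (Fin d) (ZMod p) × (Matrix (Fin d) (Fin d) (ZMod p))ᵐᵒᵖ) =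
            (y • Matrix.single ⟨1, by omega⟩ ⟨0, by omega⟩ 1
              + z • Matrix.single ⟨d - 2, by omega⟩ ⟨d - 1, by omega⟩ 1,
             MulOpposite.op
              (-(y • Matrix.single ⟨1, by omega⟩ ⟨0, by omega⟩ 1
                + z • Matrix.single ⟨d - 2, by omega⟩ ⟨d - 1, by omega⟩ 1)))) ∧
    (∀ x y : AdjRing p d, x ∈ Ideal.jacobson (⊥ : Ideal (AdjRing p d)) →
      y ∈ Ideal.jacobson (⊥ : Ideal (AdjRing p d)) → x * y = 0) := by
  classical
  have main : ∀ x : AdjRing p d,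
      x ∈ Ideal.jacobson (⊥ : Ideal (AdjRing p d)) ↔
        ∃ y z : ZMod p,
          (x : Matrix (Fin d) (Fin d) (ZMod p) × (Matrix (Fin d) (Fin d) (ZMod p))ᵐᵒᵖ) =
            Pr hd 0 0 y z := by
    intro x
    constructor
    · intro hx
      obtain ⟨a, b, y0, z0, hx'⟩ := (mem_iff hd x.1).mp x.2
      have hj := Ideal.mem_jacobson_iff.mp hx
      have comp : ∀ t : ZMod p, ∃ u v : ZMod p,
          u * t * a + u - 1 = 0 ∧ v * t * b + v - 1 = 0 := by
        intro t
        obtain ⟨v, hv⟩ := hj ⟨Pr hd t t 0 0, Pr_mem hd t t 0 0⟩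
        rw [Ideal.mem_bot] at hv
        obtain ⟨av, bv, yv, zv, hvv⟩ := (mem_iff hd v.1).mp v.2
        have hvc := congrArg Subtype.val hv
        have hlhs : ((v * ⟨Pr hd t t 0 0, Pr_mem hd t t 0 0⟩ * x + v - 1 :
            AdjRing p d) : Matrix (Fin d) (Fin d) (ZMod p) ×
              (Matrix (Fin d) (Fin d) (ZMod p))ᵐᵒᵖ)
            = Pr hd av bv yv zv * Pr hd t t 0 0 * Pr hd a b y0 z0
              + Pr hd av bv yv zv - Pr hd 1 1 0 0 := by
          rw [← hvv, ← hx', Pr_one hd]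
          rfl
        rw [hlhs] at hvc
        rw [mul_assoc, Pr_scalar_mul hd, Pr_mul hd, Pr_add hd, Pr_sub hd] at hvc
        have hz : ((0 : AdjRing p d) : Matrix (Fin d) (Fin d) (ZMod p) ×
            (Matrix (Fin d) (Fin d) (ZMod p))ᵐᵒᵖ) = Pr hd 0 0 0 0 := by
          rw [Pr_zero hd]; rfl
        rw [hz] at hvc
        obtain ⟨e1, e2, _, _⟩ := Pr_inj hd hvc
        exact ⟨av, bv, by linear_combination e1, by linear_combination e2⟩
      have ha : a = 0 := by
        by_contra hne
        obtain ⟨u, v, hu, hv⟩ := comp (-a⁻¹)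
        rw [mul_assoc, neg_mul, inv_mul_cancel₀ hne] at hu
        simp only [mul_neg_one] at hu
        have : (1 : ZMod p) = 0 := by linear_combination -hu
        exact one_ne_zero this
      have hb : b = 0 := by
        by_contra hne
        obtain ⟨u, v, hu, hv⟩ := comp (-b⁻¹)
        rw [mul_assoc, neg_mul, inv_mul_cancel₀ hne] at hv
        simp only [mul_neg_one] at hv
        have : (1 : ZMod p) = 0 := by linear_combination -hv
        exact one_ne_zero this
      exact ⟨y0, z0, by rw [hx', ha, hb]⟩
    · rintro ⟨y0, z0, hx⟩
      rw [Ideal.mem_jacobson_iff]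
      intro w
      obtain ⟨aw, bw, yw, zw, hw⟩ := (mem_iff hd w.1).mp w.2
      have hn : ((w * x : AdjRing p d) : Matrix (Fin d) (Fin d) (ZMod p) ×
          (Matrix (Fin d) (Fin d) (ZMod p))ᵐᵒᵖ)
          = Pr hd 0 0 (bw * y0) ((if (d - 2) % 2 = 0 then aw else bw) * z0) := by
        show ((w : Matrix (Fin d) (Fin d) (ZMod p) ×
          (Matrix (Fin d) (Fin d) (ZMod p))ᵐᵒᵖ) * (x : _)) = _
        rw [hw, hx]
        exact Pr_mul_nil hd _ _ _ _ _ _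
      have hn2 : (w * x) * (w * x) = (0 : AdjRing p d) := by
        apply Subtype.ext
        show ((w * x : AdjRing p d) : Matrix (Fin d) (Fin d) (ZMod p) ×
          (Matrix (Fin d) (Fin d) (ZMod p))ᵐᵒᵖ) * ((w * x : AdjRing p d) : _) = 0
        rw [hn, Pr_nil_sq hd]
      refine ⟨1 - w * x, ?_⟩
      rw [Ideal.mem_bot]
      have : (1 - w * x) * w * x + (1 - w * x) - 1 = -((w * x) * (w * x)) := by
        rw [mul_assoc]
        noncomm_ring
      rw [this, hn2, neg_zero]
  refine ⟨?_, ?_⟩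
  · intro x
    rw [main x]
    constructor <;> rintro ⟨y0, z0, hx⟩ <;> refine ⟨y0, z0, ?_⟩
    · rw [hx, Pr_nil hd]
    · rw [hx, ← Pr_nil hd]
  · intro x1 x2 h1 h2
    obtain ⟨ya, za, hxa⟩ := (main x1).mp h1
    obtain ⟨yb, zb, hxb⟩ := (main x2).mp h2
    apply Subtype.ext
    show ((x1 : Matrix (Fin d) (Fin d) (ZMod p) ×
      (Matrix (Fin d) (Fin d) (ZMod p))ᵐᵒᵖ) * (x2 : _)) = 0
    rw [hxa, hxb, Pr_nil_sq hd]
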